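/- Let F be a finite field, and let U₁ and U₂ be linear codes of length n over F with generator matrices G₁ and G₂, and parity-check matrices H₁ and H₂, respectively. Then U₁ ⊕ U₂ = Fⁿ (i.e., U₁ and U₂ form a linear complementary pair) if and only if the matrix G₁·H₂ᵀ is invertible over F. -/

import Mathlib

open Matrix

/-- Linear codes `U₁` (dimension `k`, generator `G₁`, parity-check `H₁`) and `U₂`
(dimension `n-k`, generator `G₂`, parity-check `H₂`) over a finite field form an LCP
iff `G₁·H₂ᵀ` is invertible. -/
theorem stmt4 {F : Type*} [Field F] [Fintype F] (n k : ℕ) (hk : k ≤ n)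
    (U₁ U₂ : Submodule F (Fin n → F))
    (G₁ : Matrix (Fin k) (Fin n) F) (G₂ : Matrix (Fin (n - k)) (Fin n) F)
    (H₁ : Matrix (Fin (n - k)) (Fin n) F) (H₂ : Matrix (Fin k) (Fin n) F)
    (hG₁ : U₁ = Submodule.span F (Set.range fun i => G₁ i))
    (hG₁ind : LinearIndependent F fun i => G₁ i)
    (hG₂ : U₂ = Submodule.span F (Set.range fun i => G₂ i))
    (hG₂ind : LinearIndependent F fun i => G₂ i)
    (hH₁ : (Submodule.span F (Set.range fun i => H₁ i) : Set (Fin n → F)) =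
      {x | ∀ c ∈ U₁, ∑ j, x j * c j = 0})
    (hH₁ind : LinearIndependent F fun i => H₁ i)
    (hH₂ : (Submodule.span F (Set.range fun i => H₂ i) : Set (Fin n → F)) =
      {x | ∀ c ∈ U₂, ∑ j, x j * c j = 0})
    (hH₂ind : LinearIndependent F fun i => H₂ i) :
    (U₁ ⊓ U₂ = ⊥ ∧ U₁ ⊔ U₂ = ⊤) ↔ IsUnit (G₁ * H₂ᵀ) := by
  classical
  -- finranks
  have hU₁rk : Module.finrank F U₁ = k := by
    rw [hG₁, finrank_span_eq_card hG₁ind, Fintype.card_fin]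
  have hU₂rk : Module.finrank F U₂ = n - k := by
    rw [hG₂, finrank_span_eq_card hG₂ind, Fintype.card_fin]
  -- U₂ is the kernel of mulVecLin H₂
  have hU₂le : U₂ ≤ LinearMap.ker (Matrix.mulVecLin H₂) := by
    intro x hx
    simp only [LinearMap.mem_ker, mulVecLin_apply]
    ext i
    have hmem : H₂ i ∈ (Submodule.span F (Set.range fun i => H₂ i) : Set (Fin n → F)) :=
      Submodule.subset_span (Set.mem_range_self i)
    rw [hH₂] at hmem
    simpa [mulVec, dotProduct] using hmem x hx
  have hkerrk : Module.finrank F (LinearMap.ker (Matrix.mulVecLin H₂)) = n - k := by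
    have hrn := LinearMap.finrank_range_add_finrank_ker (Matrix.mulVecLin H₂)
    have hrange : Module.finrank F (LinearMap.range (Matrix.mulVecLin H₂)) = k := by
      have h1 : Matrix.rank H₂ = k := by
        rw [← Matrix.rank_transpose]
        rw [Matrix.rank, Matrix.range_mulVecLin]
        show Module.finrank F (Submodule.span F (Set.range fun i => H₂ i)) = k
        rw [finrank_span_eq_card hH₂ind, Fintype.card_fin]
      exact h1
    rw [hrange] at hrn
    have : Module.finrank F (Fin n → F) = n := by simp
    omega
  have hU₂ : U₂ = LinearMap.ker (Matrix.mulVecLin H₂) :=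
    Submodule.eq_of_le_of_finrank_eq hU₂le (by rw [hU₂rk, hkerrk])
  -- U₁ is the range of vecMulLinear G₁
  have hU₁ : U₁ = LinearMap.range (Matrix.vecMulLinear G₁) := by
    rw [hG₁, range_vecMulLinear]
    rfl
  -- inf = ⊥ ↔ IsUnit
  have hmain : U₁ ⊓ U₂ = ⊥ ↔ IsUnit (G₁ * H₂ᵀ) := by
    rw [← Matrix.vecMul_injective_iff_isUnit]
    constructor
    · intro hbot
      have hinj : ∀ a : Fin k → F, a ᵥ* (G₁ * H₂ᵀ) = 0 → a = 0 := by
        intro a ha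
        have hx : (a ᵥ* G₁) ∈ U₁ ⊓ U₂ := by
          constructor
          · rw [hU₁]; exact ⟨a, rfl⟩
          · rw [hU₂]
            rw [SetLike.mem_coe, LinearMap.mem_ker, mulVecLin_apply]
            rw [← vecMul_transpose, vecMul_vecMul, ha]
        rw [hbot, Submodule.mem_bot] at hx
        have hGinj : Function.Injective G₁.vecMul := Matrix.vecMul_injective_iff.mpr hG₁ind
        apply hGinj
        show a ᵥ* G₁ = (0 : Fin k → F) ᵥ* G₁
        rw [hx, Matrix.zero_vecMul]
      intro a b hab
      have hab' : a ᵥ* (G₁ * H₂ᵀ) = b ᵥ* (G₁ * H₂ᵀ) := hab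
      have h0 : (a - b) ᵥ* (G₁ * H₂ᵀ) = 0 := by
        rw [Matrix.sub_vecMul, hab', sub_self]
      exact sub_eq_zero.mp (hinj _ h0)
    · intro hinj
      rw [Submodule.eq_bot_iff]
      intro x hx
      obtain ⟨hx₁, hx₂⟩ := hx
      rw [hU₁] at hx₁
      obtain ⟨a, rfl⟩ := hx₁
      rw [hU₂] at hx₂
      rw [SetLike.mem_coe, LinearMap.mem_ker, mulVecLin_apply] at hx₂
      have ha : a ᵥ* (G₁ * H₂ᵀ) = 0 := by
        rw [← vecMul_vecMul, vecMul_transpose]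
        simpa using hx₂
      have ha0 : a = 0 := by
        apply hinj
        show a ᵥ* (G₁ * H₂ᵀ) = (0 : Fin k → F) ᵥ* (G₁ * H₂ᵀ)
        rw [ha, Matrix.zero_vecMul]
      rw [ha0, map_zero]
  constructor
  · rintro ⟨h1, _⟩; exact hmain.mp h1
  · intro h
    have h1 := hmain.mpr h
    refine ⟨h1, ?_⟩
    apply Submodule.eq_top_of_finrank_eq
    have := Submodule.finrank_sup_add_finrank_inf_eq U₁ U₂
    rw [h1] at this
    simp only [finrank_bot, add_zero] at this
    rw [this, hU₁rk, hU₂rk]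
    simp [Module.finrank_pi]
    omega
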